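/- Let r_i, R_i be reals with 0 < r_i ≤ R_i. If r_i·h ≤ x_i ≤ R_i·h for a self-polar element h (h* = h) in a partially ordered abelian semigroup with order-reversing involution, compatible scaling by positive reals with (a·x)* = a^{-1}·x*, then [R_1, r_2, R_3, …]·h ≤ [x_1,…,x_n] ≤ [r_1, R_2, r_3, …]·h, where the scalar continued fractions are formed with the reciprocal as involution and the bounds alternate starting with R_1 (resp. r_1). -/

import Mathlib

open scoped NNReal

/-- The continued fraction `[x₁,…,xₙ]` on a semigroup with involution `s`:
`[x] = s x` and `[x₁,…,x_{n+1}] = s (x₁ + [x₂,…,x_{n+1}])`. -/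
def cf {K : Type*} [AddCommMonoid K] (s : K → K) : List K → K
  | [] => s 0
  | [x] => s x
  | x :: y :: l => s (x + cf s (y :: l))

/-- The numerical continued fraction `[b₁,…,bₙ] = 1/(b₁ + 1/(b₂ + ⋯ + 1/bₙ))` on `ℝ≥0`. -/
noncomputable def numcf : List ℝ≥0 → ℝ≥0
  | [] => 0
  | [b] => b⁻¹
  | b :: c :: l => (b + numcf (c :: l))⁻¹


lemma cf_cons {K : Type*} [AddCommMonoid K] (s : K → K) (a : K) (l : List K)
    (hl : l ≠ []) : cf s (a :: l) = s (a + cf s l) := by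
  cases l with
  | nil => simp at hl
  | cons b t => rfl

lemma numcf_cons (b : ℝ≥0) (l : List ℝ≥0) (hl : l ≠ []) :
    numcf (b :: l) = (b + numcf l)⁻¹ := by
  cases l with
  | nil => simp at hl
  | cons c t => rfl

lemma cf_sandwich_aux {K : Type*} [AddCommMonoid K] [PartialOrder K] [Module ℝ≥0 K]
    (s : K → K) (h : K)
    (hadd : ∀ a b c : K, a ≤ b → a + c ≤ b + c)
    (hanti : ∀ a b : K, a ≤ b → s b ≤ s a)
    (hself : s h = h)
    (hscale : ∀ (a : ℝ≥0) (x : K), 0 < a → s (a • x) = a⁻¹ • s x) :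
    ∀ (m : ℕ) (x : ℕ → K) (r R : ℕ → ℝ≥0),
      (∀ i, 0 < r i) → (∀ i, r i ≤ R i) → (∀ i, r i • h ≤ x i) → (∀ i, x i ≤ R i • h) →
      numcf (List.ofFn fun i : Fin (m+1) => if i.val % 2 = 0 then R i else r i) • h ≤
          cf s (List.ofFn fun i : Fin (m+1) => x i) ∧
        cf s (List.ofFn fun i : Fin (m+1) => x i) ≤
          numcf (List.ofFn fun i : Fin (m+1) => if i.val % 2 = 0 then r i else R i) • h := by
  intro m
  induction m with
  | zero =>
    intro x r R hr hrR hxl hxu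
    have hR0 : (0:ℝ≥0) < R 0 := lt_of_lt_of_le (hr 0) (hrR 0)
    constructor
    · simp only [List.ofFn_succ, List.ofFn_zero, Fin.val_zero, Nat.zero_mod, if_pos rfl]
      show (R 0)⁻¹ • h ≤ cf s [x 0]
      have := hanti _ _ (hxu 0)
      rwa [hscale _ _ hR0, hself] at this
    · simp only [List.ofFn_succ, List.ofFn_zero, Fin.val_zero, Nat.zero_mod, if_pos rfl]
      show cf s [x 0] ≤ (r 0)⁻¹ • h
      have := hanti _ _ (hxl 0)
      rwa [hscale _ _ (hr 0), hself] at this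
  | succ m ih =>
    intro x r R hr hrR hxl hxu
    have hR0 : (0:ℝ≥0) < R 0 := lt_of_lt_of_le (hr 0) (hrR 0)
    obtain ⟨IH1, IH2⟩ := ih (fun i => x (i+1)) (fun i => r (i+1)) (fun i => R (i+1))
      (fun i => hr _) (fun i => hrR _) (fun i => hxl _) (fun i => hxu _)
    set L : List K := List.ofFn fun i : Fin (m+1) => x (i+1) with hL
    have hLne : L ≠ [] := by simp [hL, List.ofFn_succ]
    set Low : List ℝ≥0 :=
      List.ofFn fun i : Fin (m+1) => if i.val % 2 = 0 then R (i+1) else r (i+1) with hLow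
    set Up : List ℝ≥0 :=
      List.ofFn fun i : Fin (m+1) => if i.val % 2 = 0 then r (i+1) else R (i+1) with hUp
    have hLowne : Low ≠ [] := by simp [hLow, List.ofFn_succ]
    have hUpne : Up ≠ [] := by simp [hUp, List.ofFn_succ]
    -- rewrite the three ofFn lists as cons
    have e1 : (List.ofFn fun i : Fin (m+2) => x i) = x 0 :: L := by
      rw [List.ofFn_succ]; rfl
    have e2 : (List.ofFn fun i : Fin (m+2) => if i.val % 2 = 0 then R i else r i)
        = R 0 :: Up := by
      rw [List.ofFn_succ]
      simp only [Fin.val_zero, Nat.zero_mod, if_pos rfl, Fin.val_succ]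
      congr 1
      rw [hUp]
      congr 1
      funext i
      rcases Nat.mod_two_eq_zero_or_one i.val with hpar | hpar <;>
        simp [Nat.add_mod, hpar]
    have e3 : (List.ofFn fun i : Fin (m+2) => if i.val % 2 = 0 then r i else R i)
        = r 0 :: Low := by
      rw [List.ofFn_succ]
      simp only [Fin.val_zero, Nat.zero_mod, if_pos rfl, Fin.val_succ]
      congr 1
      rw [hLow]
      congr 1
      funext i
      rcases Nat.mod_two_eq_zero_or_one i.val with hpar | hpar <;>
        simp [Nat.add_mod, hpar]
    rw [e1, e2, e3, cf_cons s _ _ hLne, numcf_cons _ _ hUpne, numcf_cons _ _ hLowne]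
    constructor
    · -- lower bound
      have h1 : x 0 + cf s L ≤ R 0 • h + cf s L := hadd _ _ _ (hxu 0)
      have h2 : R 0 • h + cf s L ≤ R 0 • h + numcf Up • h := by
        rw [add_comm (R 0 • h) (cf s L), add_comm (R 0 • h) (numcf Up • h)]
        exact hadd _ _ _ IH2
      have h3 : x 0 + cf s L ≤ (R 0 + numcf Up) • h := by
        rw [add_smul]; exact le_trans h1 h2
      have := hanti _ _ h3
      rwa [hscale _ _ (add_pos_of_pos_of_nonneg hR0 zero_le), hself] at this
    · -- upper bound
      have h1 : r 0 • h + cf s L ≤ x 0 + cf s L := hadd _ _ _ (hxl 0)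
      have h2 : r 0 • h + numcf Low • h ≤ r 0 • h + cf s L := by
        rw [add_comm (r 0 • h) (cf s L), add_comm (r 0 • h) (numcf Low • h)]
        exact hadd _ _ _ IH1
      have h3 : (r 0 + numcf Low) • h ≤ x 0 + cf s L := by
        rw [add_smul]; exact le_trans h2 h1
      have := hanti _ _ h3
      rwa [hscale _ _ (add_pos_of_pos_of_nonneg (hr 0) zero_le), hself] at this

/-- If `rᵢ h ≤ xᵢ ≤ Rᵢ h` for a self-polar `h` in a partially ordered abelian semigroup with
order-reversing involution and compatible positive scaling with `(a x)* = a⁻¹ x*`, then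
`[R₁, r₂, R₃, …] h ≤ [x₁,…,xₙ] ≤ [r₁, R₂, r₃, …] h` (the scalar continued fractions
alternate, starting with `R₁` resp. `r₁`). -/
theorem cf_sandwich {K : Type*} [AddCommMonoid K] [PartialOrder K] [Module ℝ≥0 K]
    (s : K → K) (h : K)
    (hbot : ∀ x : K, 0 ≤ x)
    (hadd : ∀ a b c : K, a ≤ b → a + c ≤ b + c)
    (hanti : ∀ a b : K, a ≤ b → s b ≤ s a)
    (hinv : ∀ a : K, s (s a) = a)
    (hself : s h = h)
    (hscale : ∀ (a : ℝ≥0) (x : K), 0 < a → s (a • x) = a⁻¹ • s x)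
    (n : ℕ) (hn : 1 ≤ n) (x : ℕ → K) (r R : ℕ → ℝ≥0)
    (hr : ∀ i, 0 < r i) (hrR : ∀ i, r i ≤ R i)
    (hxl : ∀ i, r i • h ≤ x i) (hxu : ∀ i, x i ≤ R i • h) :
    numcf (List.ofFn fun i : Fin n => if i.val % 2 = 0 then R i else r i) • h ≤
        cf s (List.ofFn fun i : Fin n => x i) ∧
      cf s (List.ofFn fun i : Fin n => x i) ≤
        numcf (List.ofFn fun i : Fin n => if i.val % 2 = 0 then r i else R i) • h := by
  obtain ⟨m, rfl⟩ : ∃ m, n = m + 1 := ⟨n - 1, by omega⟩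
  exact cf_sandwich_aux s h hadd hanti hself hscale m x r R hr hrR hxl hxu
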